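/- For a degree-$2p$-exact-up-to-$\epsilon$ quadrature rule (residual $\ell_1$-norm $\le \epsilon$ on the orthonormal basis up to degree $2p$), bounded operator $\mathbb{I}$ with constant $W$, and projection error $\|y - y_p\|_2 \le \delta$, each computed coefficient satisfies $|c_j - \tilde c_j| \le LT\epsilon + W\delta$ for all $j \le N_p$, where $c_j = \mathbb{E}[y\Psi_j]$, $\tilde c_j = \mathbb{I}[y\Psi_j]$, $\|y\|_2 \le L$, and $T = \max_{j,l \le N_{2p}}\|\Psi_j\Psi_l\|_2$. -/

import Mathlib

open MeasureTheory


lemma aux_int_mul {Ω : Type*} [MeasurableSpace Ω] {μ : Measure Ω} {f g : Ω → ℝ}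
    (hf : MemLp f 2 μ) (hg : MemLp g 2 μ) : Integrable (fun x => f x * g x) μ := by
  refine Integrable.mono' (hf.integrable_sq.add hg.integrable_sq) (hf.1.mul hg.1) ?_
  filter_upwards with x
  have : |f x * g x| ≤ f x ^ 2 + g x ^ 2 := by
    rw [abs_mul]; nlinarith [abs_nonneg (f x), abs_nonneg (g x), sq_abs (f x), sq_abs (g x),
      sq_nonneg (|f x| - |g x|)]
  simpa [abs_mul] using this

lemma aux_cs {Ω : Type*} [MeasurableSpace Ω] {μ : Measure Ω} {f g : Ω → ℝ}
    (hf : MemLp f 2 μ) (hg : MemLp g 2 μ) :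
    ∫ x, |f x * g x| ∂μ ≤ Real.sqrt (∫ x, f x ^ 2 ∂μ) * Real.sqrt (∫ x, g x ^ 2 ∂μ) := by
  have hpq : Real.HolderConjugate 2 2 := Real.HolderConjugate.two_two
  have h2 : ENNReal.ofReal (2:ℝ) = 2 := by norm_num
  have := integral_mul_norm_le_Lp_mul_Lq (μ := μ) hpq (h2 ▸ hf) (h2 ▸ hg)
  calc ∫ x, |f x * g x| ∂μ = ∫ x, ‖f x‖ * ‖g x‖ ∂μ := by
        simp [abs_mul, Real.norm_eq_abs]
    _ ≤ (∫ a, ‖f a‖ ^ (2:ℝ) ∂μ) ^ (1/2:ℝ) * (∫ a, ‖g a‖ ^ (2:ℝ) ∂μ) ^ (1/2:ℝ) := this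
    _ = Real.sqrt (∫ x, f x ^ 2 ∂μ) * Real.sqrt (∫ x, g x ^ 2 ∂μ) := by
        rw [Real.sqrt_eq_rpow, Real.sqrt_eq_rpow]
        congr 2 <;> [skip; skip] <;> apply integral_congr_ae <;> filter_upwards with x <;>
          rw [Real.norm_eq_abs, show ((2:ℝ)) = ((2:ℕ):ℝ) by norm_num, Real.rpow_natCast, sq_abs]

lemma aux_ortho {Ω : Type*} [MeasurableSpace Ω] {μ : Measure Ω} {n : ℕ} {Ψ : Fin n → Ω → ℝ}
    (horth : ∀ i j, ∫ x, Ψ i x * Ψ j x ∂μ = if i = j then (1:ℝ) else 0)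
    (hInt : ∀ i j, Integrable (fun x => Ψ i x * Ψ j x) μ)
    (d : Fin n → ℝ) (i : Fin n) :
    ∫ x, (∑ m, d m * Ψ m x) * Ψ i x ∂μ = d i := by
  have h1 : ∀ x, (∑ m, d m * Ψ m x) * Ψ i x = ∑ m, d m * (Ψ m x * Ψ i x) := by
    intro x; rw [Finset.sum_mul]; simp [mul_assoc]
  rw [integral_congr_ae (Filter.Eventually.of_forall fun x => h1 x),
    integral_finset_sum _ (fun m _ => (hInt m i).const_mul _)]
  simp_rw [integral_const_mul, horth]
  simp only [mul_ite, mul_one, mul_zero, Finset.sum_ite_eq', Finset.mem_univ, if_true]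


/-- Coefficient error bound: under Assumptions 1–3, every computed coefficient satisfies
`|c_j - c̃_j| ≤ L T ε + W δ`. -/
theorem stmt_18 {Ω : Type*} [MeasurableSpace Ω] (μ : Measure Ω) [IsProbabilityMeasure μ]
    (n₁ n₂ : ℕ) (hn : n₁ ≤ n₂)
    (Ψ : Fin n₂ → Ω → ℝ)
    (horth : ∀ i j, ∫ x, Ψ i x * Ψ j x ∂μ = if i = j then (1 : ℝ) else 0)
    (hΨint : ∀ j, Integrable (Ψ j) μ)
    (hΨprod2 : ∀ i j, Integrable (fun x => (Ψ i x * Ψ j x) ^ 2) μ)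
    (y : Ω → ℝ) (L δ ε W T : ℝ)
    (hymeas : AEStronglyMeasurable y μ)
    (hy2 : Integrable (fun x => (y x) ^ 2) μ)
    (hyΨ : ∀ j, Integrable (fun x => y x * Ψ j x) μ)
    (hL : Real.sqrt (∫ x, (y x) ^ 2 ∂μ) ≤ L)
    (c : Fin n₂ → ℝ) (hc : ∀ j, c j = ∫ x, y x * Ψ j x ∂μ)
    (yp : Ω → ℝ)
    (hyp : yp = fun x => ∑ j : Fin n₁, c (Fin.castLE hn j) * Ψ (Fin.castLE hn j) x)
    (hδ : Real.sqrt (∫ x, (y x - yp x) ^ 2 ∂μ) ≤ δ)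
    (hdiff2 : Integrable (fun x => (y x - yp x) ^ 2) μ)
    (M : ℕ) (ξ : Fin M → Ω) (w : Fin M → ℝ)
    (hW : ∀ f : Ω → ℝ, Integrable f μ →
      |∑ k, w k * f (ξ k)| ≤ W * ∫ x, |f x| ∂μ)
    (hε : ∑ j : Fin n₂, |(∑ k, w k * Ψ j (ξ k)) - ∫ x, Ψ j x ∂μ| ≤ ε)
    (hT : ∀ j l : Fin n₂, Real.sqrt (∫ x, (Ψ j x * Ψ l x) ^ 2 ∂μ) ≤ T)
    (hspan : ∀ j l : Fin n₁, ∃ a : Fin n₂ → ℝ,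
      ∀ x, Ψ (Fin.castLE hn j) x * Ψ (Fin.castLE hn l) x = ∑ m, a m * Ψ m x) :
    ∀ j : Fin n₁,
      |c (Fin.castLE hn j) - ∑ k, w k * (y (ξ k) * Ψ (Fin.castLE hn j) (ξ k))| ≤
        L * T * ε + W * δ := by
  intro j
  set J : Fin n₂ := Fin.castLE hn j with hJ
  -- basic nonnegativity
  have hL0 : 0 ≤ L := le_trans (Real.sqrt_nonneg _) hL
  have hT0 : 0 ≤ T := le_trans (Real.sqrt_nonneg _) (hT J J)
  have hε0 : 0 ≤ ε := le_trans (Finset.sum_nonneg fun _ _ => abs_nonneg _) hε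
  have hW0 : 0 ≤ W := by
    have h := hW (fun _ => (1:ℝ)) (integrable_const 1)
    simp at h
    exact le_trans (abs_nonneg _) h
  -- measurability & MemLp facts
  have hΨmeas : ∀ m, AEStronglyMeasurable (Ψ m) μ := fun m => (hΨint m).1
  have hΨ2 : ∀ m, MemLp (Ψ m) 2 μ := by
    intro m
    refine (memLp_two_iff_integrable_sq (hΨmeas m)).2 ?_
    refine Integrable.mono' ((hΨprod2 m m).add (integrable_const 1))
      (by simpa [pow_two, Pi.mul_def] using (hΨmeas m).mul (hΨmeas m)) ?_
    filter_upwards with x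
    have : |Ψ m x ^ 2| ≤ (Ψ m x * Ψ m x) ^ 2 + 1 := by
      rw [abs_of_nonneg (sq_nonneg _)]; nlinarith [sq_nonneg (Ψ m x ^ 2 - 1)]
    simpa using this
  have hΨp2 : ∀ i l, MemLp (fun x => Ψ i x * Ψ l x) 2 μ :=
    fun i l => (memLp_two_iff_integrable_sq ((hΨmeas i).mul (hΨmeas l))).2 (hΨprod2 i l)
  have horthInt : ∀ i l, Integrable (fun x => Ψ i x * Ψ l x) μ :=
    fun i l => aux_int_mul (hΨ2 i) (hΨ2 l)
  have hy2' : MemLp y 2 μ := (memLp_two_iff_integrable_sq hymeas).2 hy2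
  have hyp2 : MemLp yp 2 μ := by
    rw [hyp]
    have h := memLp_finset_sum' (μ := μ) (p := 2) Finset.univ
      (f := fun (l : Fin n₁) (x : Ω) => c (Fin.castLE hn l) * Ψ (Fin.castLE hn l) x)
      (fun l _ => (hΨ2 (Fin.castLE hn l)).const_mul _)
    have heq : (fun x => ∑ l : Fin n₁, c (Fin.castLE hn l) * Ψ (Fin.castLE hn l) x)
        = ∑ l : Fin n₁, fun x => c (Fin.castLE hn l) * Ψ (Fin.castLE hn l) x := by
      funext x; simp
    rw [heq]; exact h
  have hdiffmem : MemLp (fun x => yp x - y x) 2 μ := by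
    refine (memLp_two_iff_integrable_sq (hyp2.1.sub hymeas)).2 ?_
    refine hdiff2.congr (Filter.Eventually.of_forall fun x => ?_)
    simp only [Pi.sub_apply]; ring
  -- ortho integral with mapped index
  have hOT : ∀ {ι : Type} [Fintype ι] (e : ι → Fin n₂) (d : ι → ℝ) (i : Fin n₂),
      ∫ x, (∑ l, d l * Ψ (e l) x) * Ψ i x ∂μ = ∑ l, d l * (if e l = i then (1:ℝ) else 0) := by
    intro ι _ e d i
    have h1 : ∀ x, (∑ l, d l * Ψ (e l) x) * Ψ i x = ∑ l, d l * (Ψ (e l) x * Ψ i x) := by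
      intro x; rw [Finset.sum_mul]; exact Finset.sum_congr rfl fun l _ => by ring
    rw [integral_congr_ae (ae_of_all _ h1),
      integral_finset_sum _ (fun l _ => (horthInt (e l) i).const_mul _)]
    simp_rw [integral_const_mul, horth]
  -- ∫ yp Ψ_l = c_l for l in range
  have hcJ' : ∀ l : Fin n₁, ∫ x, yp x * Ψ (Fin.castLE hn l) x ∂μ = c (Fin.castLE hn l) := by
    intro l
    rw [hyp, hOT (fun l : Fin n₁ => Fin.castLE hn l) (fun l => c (Fin.castLE hn l))]
    simp [Fin.castLE_inj]
  have hcJ : ∫ x, yp x * Ψ J x ∂μ = c J := hcJ' j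
  -- Bessel: ∫ yp² ≤ ∫ y²
  have hyyp : ∫ x, y x * yp x ∂μ = ∑ l : Fin n₁, (c (Fin.castLE hn l)) ^ 2 := by
    rw [hyp]
    have h1 : ∀ x, y x * (∑ l : Fin n₁, c (Fin.castLE hn l) * Ψ (Fin.castLE hn l) x)
        = ∑ l : Fin n₁, c (Fin.castLE hn l) * (y x * Ψ (Fin.castLE hn l) x) := by
      intro x; rw [Finset.mul_sum]; exact Finset.sum_congr rfl fun l _ => by ring
    rw [integral_congr_ae (ae_of_all _ h1),
      integral_finset_sum _ (fun l _ => (hyΨ (Fin.castLE hn l)).const_mul _)]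
    simp_rw [integral_const_mul, ← hc]
    exact Finset.sum_congr rfl fun l _ => (sq (c (Fin.castLE hn l))).symm
  have hypsq : ∫ x, yp x ^ 2 ∂μ = ∑ l : Fin n₁, (c (Fin.castLE hn l)) ^ 2 := by
    have h1 : ∀ x, yp x ^ 2
        = ∑ l : Fin n₁, c (Fin.castLE hn l) * (yp x * Ψ (Fin.castLE hn l) x) := by
      intro x
      conv_lhs => rw [sq, hyp]
      rw [Finset.mul_sum]; exact Finset.sum_congr rfl fun l _ => by rw [← hyp]; ring
    rw [integral_congr_ae (ae_of_all _ h1),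
      integral_finset_sum _ (fun l _ => (aux_int_mul hyp2 (hΨ2 (Fin.castLE hn l))).const_mul _)]
    simp_rw [integral_const_mul, hcJ']
    exact Finset.sum_congr rfl fun l _ => (sq (c (Fin.castLE hn l))).symm
  have hbessel : ∫ x, yp x ^ 2 ∂μ ≤ ∫ x, y x ^ 2 ∂μ := by
    have h0 : 0 ≤ ∫ x, (y x - yp x) ^ 2 ∂μ := integral_nonneg fun x => sq_nonneg _
    have e1 : ∀ x, (y x - yp x) ^ 2 = (y x ^ 2 - 2 * (y x * yp x)) + yp x ^ 2 := by
      intro x; ring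
    have hmul : Integrable (fun x => y x * yp x) μ := aux_int_mul hy2' hyp2
    have key : ∫ x, (y x - yp x) ^ 2 ∂μ
        = (∫ x, y x ^ 2 ∂μ) - 2 * (∫ x, y x * yp x ∂μ) + ∫ x, yp x ^ 2 ∂μ := by
      calc ∫ x, (y x - yp x) ^ 2 ∂μ
          = ∫ x, (y x ^ 2 - 2 * (y x * yp x)) + yp x ^ 2 ∂μ := integral_congr_ae (ae_of_all _ e1)
        _ = (∫ x, y x ^ 2 - 2 * (y x * yp x) ∂μ) + ∫ x, yp x ^ 2 ∂μ :=
            integral_add (hy2.sub (hmul.const_mul 2)) hyp2.integrable_sq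
        _ = ((∫ x, y x ^ 2 ∂μ) - ∫ x, 2 * (y x * yp x) ∂μ) + ∫ x, yp x ^ 2 ∂μ := by
            rw [integral_sub hy2 (hmul.const_mul 2)]
        _ = (∫ x, y x ^ 2 ∂μ) - 2 * (∫ x, y x * yp x ∂μ) + ∫ x, yp x ^ 2 ∂μ := by
            rw [integral_const_mul]
      
    rw [key, hyyp, hypsq] at h0
    linarith [hypsq]
  have hLp : Real.sqrt (∫ x, yp x ^ 2 ∂μ) ≤ L := le_trans (Real.sqrt_le_sqrt hbessel) hL
  -- expansion of yp * Ψ_J in the basis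
  choose a ha using hspan j
  set b : Fin n₂ → ℝ := fun m => ∑ l : Fin n₁, c (Fin.castLE hn l) * a l m with hb
  have hexp : ∀ x, yp x * Ψ J x = ∑ m, b m * Ψ m x := by
    intro x
    rw [hyp]
    calc (∑ l : Fin n₁, c (Fin.castLE hn l) * Ψ (Fin.castLE hn l) x) * Ψ J x
        = ∑ l : Fin n₁, c (Fin.castLE hn l) * (Ψ (Fin.castLE hn j) x * Ψ (Fin.castLE hn l) x) := by
          rw [Finset.sum_mul]; exact Finset.sum_congr rfl fun l _ => by rw [hJ]; ring
      _ = ∑ l : Fin n₁, c (Fin.castLE hn l) * ∑ m, a l m * Ψ m x := by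
          exact Finset.sum_congr rfl fun l _ => by rw [ha l x]
      _ = ∑ m, b m * Ψ m x := by
          simp_rw [Finset.mul_sum]
          rw [Finset.sum_comm]
          refine Finset.sum_congr rfl fun m _ => ?_
          rw [hb, Finset.sum_mul]
          exact Finset.sum_congr rfl fun l _ => by ring
  have hbval : ∀ m, b m = ∫ x, yp x * (Ψ J x * Ψ m x) ∂μ := by
    intro m
    have h1 : ∫ x, (∑ m', b m' * Ψ m' x) * Ψ m x ∂μ = b m := by
      rw [hOT (fun m' : Fin n₂ => m') b m]
      simp
    have h2 : ∫ x, (∑ m', b m' * Ψ m' x) * Ψ m x ∂μ = ∫ x, yp x * (Ψ J x * Ψ m x) ∂μ :=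
      integral_congr_ae (ae_of_all _ fun x => by dsimp only; rw [← hexp x]; ring)
    rw [← h1, h2]
  have hbbd : ∀ m, |b m| ≤ L * T := by
    intro m
    rw [hbval m]
    calc |∫ x, yp x * (Ψ J x * Ψ m x) ∂μ| ≤ ∫ x, |yp x * (Ψ J x * Ψ m x)| ∂μ := by
          simpa only [Real.norm_eq_abs] using
            norm_integral_le_integral_norm (fun x => yp x * (Ψ J x * Ψ m x)) (μ := μ)
      _ ≤ Real.sqrt (∫ x, yp x ^ 2 ∂μ) * Real.sqrt (∫ x, (Ψ J x * Ψ m x) ^ 2 ∂μ) :=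
          aux_cs hyp2 (hΨp2 J m)
      _ ≤ L * T := mul_le_mul hLp (hT J m) (Real.sqrt_nonneg _) hL0
  -- quadrature identities
  have hq1 : ∑ k, w k * (yp (ξ k) * Ψ J (ξ k)) = ∑ m, b m * ∑ k, w k * Ψ m (ξ k) := by
    calc ∑ k, w k * (yp (ξ k) * Ψ J (ξ k)) = ∑ k, ∑ m, w k * (b m * Ψ m (ξ k)) := by
          refine Finset.sum_congr rfl fun k _ => ?_
          rw [hexp (ξ k), Finset.mul_sum]
      _ = ∑ m, ∑ k, w k * (b m * Ψ m (ξ k)) := Finset.sum_comm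
      _ = ∑ m, b m * ∑ k, w k * Ψ m (ξ k) := by
          refine Finset.sum_congr rfl fun m _ => ?_
          rw [Finset.mul_sum]; exact Finset.sum_congr rfl fun k _ => by ring
  have hq2 : c J = ∑ m, b m * ∫ x, Ψ m x ∂μ := by
    rw [← hcJ, integral_congr_ae (ae_of_all _ fun x => hexp x),
      integral_finset_sum _ (fun m _ => (hΨint m).const_mul _)]
    simp_rw [integral_const_mul]
  -- term 1: quadrature residual
  have hterm1 : |c J - ∑ k, w k * (yp (ξ k) * Ψ J (ξ k))| ≤ L * T * ε := by
    rw [hq1, hq2, ← Finset.sum_sub_distrib]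
    calc |∑ m, (b m * ∫ x, Ψ m x ∂μ - b m * ∑ k, w k * Ψ m (ξ k))|
        ≤ ∑ m, |b m * ∫ x, Ψ m x ∂μ - b m * ∑ k, w k * Ψ m (ξ k)| :=
          Finset.abs_sum_le_sum_abs _ _
      _ = ∑ m, |b m| * |(∑ k, w k * Ψ m (ξ k)) - ∫ x, Ψ m x ∂μ| := by
          refine Finset.sum_congr rfl fun m _ => ?_
          rw [← mul_sub, abs_mul, abs_sub_comm]
      _ ≤ ∑ m, (L * T) * |(∑ k, w k * Ψ m (ξ k)) - ∫ x, Ψ m x ∂μ| :=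
          Finset.sum_le_sum fun m _ => mul_le_mul_of_nonneg_right (hbbd m) (abs_nonneg _)
      _ = (L * T) * ∑ m, |(∑ k, w k * Ψ m (ξ k)) - ∫ x, Ψ m x ∂μ| := by
          rw [Finset.mul_sum]
      _ ≤ L * T * ε := mul_le_mul_of_nonneg_left hε (mul_nonneg hL0 hT0)
  -- term 2: projection error
  have hterm2 : |(∑ k, w k * (yp (ξ k) * Ψ J (ξ k))) - ∑ k, w k * (y (ξ k) * Ψ J (ξ k))|
      ≤ W * δ := by
    have hint : Integrable (fun x => (yp x - y x) * Ψ J x) μ := aux_int_mul hdiffmem (hΨ2 J)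
    have h1 := hW _ hint
    have h2 : ∑ k, w k * ((yp (ξ k) - y (ξ k)) * Ψ J (ξ k))
        = (∑ k, w k * (yp (ξ k) * Ψ J (ξ k))) - ∑ k, w k * (y (ξ k) * Ψ J (ξ k)) := by
      rw [← Finset.sum_sub_distrib]; exact Finset.sum_congr rfl fun k _ => by ring
    rw [← h2]
    refine le_trans h1 ?_
    have h3 := aux_cs (μ := μ) hdiffmem (hΨ2 J)
    have h4 : ∫ x, (Ψ J x) ^ 2 ∂μ = 1 := by
      have := horth J J
      simp at this
      rw [← this]
      exact integral_congr_ae (ae_of_all _ fun x => sq (Ψ J x))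
    have h5 : ∫ x, (yp x - y x) ^ 2 ∂μ = ∫ x, (y x - yp x) ^ 2 ∂μ :=
      integral_congr_ae (ae_of_all _ fun x => by ring)
    rw [h4, Real.sqrt_one, mul_one, h5] at h3
    calc W * ∫ x, |(yp x - y x) * Ψ J x| ∂μ
        ≤ W * Real.sqrt (∫ x, (y x - yp x) ^ 2 ∂μ) := mul_le_mul_of_nonneg_left h3 hW0
      _ ≤ W * δ := mul_le_mul_of_nonneg_left hδ hW0
  calc |c J - ∑ k, w k * (y (ξ k) * Ψ J (ξ k))|
      ≤ |c J - ∑ k, w k * (yp (ξ k) * Ψ J (ξ k))|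
        + |(∑ k, w k * (yp (ξ k) * Ψ J (ξ k))) - ∑ k, w k * (y (ξ k) * Ψ J (ξ k))| :=
        abs_sub_le _ _ _
    _ ≤ L * T * ε + W * δ := add_le_add hterm1 hterm2
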